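/- Let G = (V,E) be a finite graph, a₀ ∈ V, and k ≥ 1. Let P_k(G) denote G with a path of length k attached at a₀, i.e., the graph with vertex set V ∪ {a₁,…,a_k} (new vertices) and edge set E ∪ {a₀a₁, a₁a₂, …, a_{k−1}a_k}. Fix a real number x with x > −1/4 and x ≠ 0, let λ₁, λ₂ be the roots of λ² − λ − x, and suppose λ₁^{k+2} ≠ λ₂^{k+2}. Assign weight x to every vertex. Then I(P_k(G); x) = C_k · I(G; y), where y assigns weight B_k/C_k to a₀ and weight x to every other vertex of G, with B_k = (x/(λ₂−λ₁))(−λ₁^{k+1} + λ₂^{k+1}) and C_k = (1/(λ₂−λ₁))(−λ₁^{k+2} + λ₂^{k+2}). The condition λ₁^{k+2} ≠ λ₂^{k+2} guarantees C_k ≠ 0. -/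

import Mathlib

open Finset
open scoped Classical

/-- A finset of vertices is independent in `G` if no two of its members are adjacent. -/
def IndepSet {V : Type*} (G : SimpleGraph V) (A : Finset V) : Prop :=
  ∀ u ∈ A, ∀ v ∈ A, ¬ G.Adj u v

/-- The multivariate independent set polynomial `I(G; x)`, evaluated at real vertex weights. -/
noncomputable def indPoly {V : Type*} [Fintype V] (G : SimpleGraph V) (x : V → ℝ) : ℝ :=
  ∑ A : Finset V, if IndepSet G A then ∏ v ∈ A, x v else 0

/-- `G` with a path `a₀a₁⋯a_k` of `k` new vertices attached at `a₀`. The new vertices are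
`Sum.inr 0, …, Sum.inr (k-1)`, with `a₀ — a₁` and consecutive path edges. -/
def pathAttach {V : Type*} (G : SimpleGraph V) (a0 : V) (k : ℕ) :
    SimpleGraph (V ⊕ Fin k) :=
  SimpleGraph.fromRel (fun p q =>
    (∃ u v : V, p = Sum.inl u ∧ q = Sum.inl v ∧ G.Adj u v) ∨
    (∃ i : Fin k, p = Sum.inl a0 ∧ q = Sum.inr i ∧ (i : ℕ) = 0) ∨
    (∃ i j : Fin k, p = Sum.inr i ∧ q = Sum.inr j ∧ (i : ℕ) + 1 = (j : ℕ)))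



noncomputable def Pn (x : ℝ) (n : ℕ) : ℝ :=
  ∑ T ∈ (Finset.range n).powerset, if (∀ i ∈ T, i + 1 ∉ T) then x ^ T.card else 0

noncomputable def Qn (x : ℝ) (n : ℕ) : ℝ :=
  ∑ T ∈ (Finset.range n).powerset,
    if ((∀ i ∈ T, i + 1 ∉ T) ∧ ∀ i ∈ T, i + 1 ≠ n) then x ^ T.card else 0

noncomputable def Rn (x : ℝ) (n : ℕ) : ℝ :=
  ∑ T ∈ (Finset.range n).powerset,
    if ((∀ i ∈ T, i + 1 ∉ T) ∧ 0 ∉ T) then x ^ T.card else 0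

noncomputable def Sn (x : ℝ) (n : ℕ) : ℝ :=
  ∑ T ∈ (Finset.range n).powerset,
    if ((∀ i ∈ T, i + 1 ∉ T) ∧ 0 ∉ T ∧ ∀ i ∈ T, i + 1 ≠ n) then x ^ T.card else 0

lemma sum_powerset_range_succ (n : ℕ) (f : Finset ℕ → ℝ) :
    ∑ T ∈ (Finset.range (n + 1)).powerset, f T
      = ∑ T ∈ (Finset.range n).powerset, f T
        + ∑ T ∈ (Finset.range n).powerset, f (insert n T) := by
  rw [Finset.range_add_one, Finset.sum_powerset_insert Finset.notMem_range_self]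

lemma Pn_zero (x : ℝ) : Pn x 0 = 1 := by simp [Pn]
lemma Qn_zero (x : ℝ) : Qn x 0 = 1 := by simp [Qn]
lemma Rn_zero (x : ℝ) : Rn x 0 = 1 := by simp [Rn]

lemma insert_indep_iff (n : ℕ) (T : Finset ℕ) (hsub : T ⊆ Finset.range n) :
    (∀ i ∈ insert n T, i + 1 ∉ insert n T)
      ↔ ((∀ i ∈ T, i + 1 ∉ T) ∧ ∀ i ∈ T, i + 1 ≠ n) := by
  constructor
  · intro h
    refine ⟨fun i hi hi1 => h i (mem_insert_of_mem hi) (mem_insert_of_mem hi1),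
      fun i hi he => h i (mem_insert_of_mem hi) (he ▸ mem_insert_self n T)⟩
  · rintro ⟨h1, h2⟩ i hi hmem
    rcases Finset.mem_insert.1 hi with rfl | hi
    · rcases Finset.mem_insert.1 hmem with h | h
      · omega
      · have := Finset.mem_range.1 (hsub h); omega
    · rcases Finset.mem_insert.1 hmem with h | h
      · exact h2 i hi h
      · exact h1 i hi h

lemma Pn_succ (x : ℝ) (n : ℕ) : Pn x (n + 1) = Pn x n + x * Qn x n := by
  unfold Pn Qn
  rw [sum_powerset_range_succ, Finset.mul_sum]
  congr 1
  refine Finset.sum_congr rfl fun T hT => ?_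
  have hsub : T ⊆ Finset.range n := Finset.mem_powerset.1 hT
  have hTn : n ∉ T := fun h => by have := Finset.mem_range.1 (hsub h); omega
  rw [Finset.card_insert_of_notMem hTn]
  simp only [insert_indep_iff n T hsub]
  split_ifs with h
  · ring
  · ring

lemma Qn_succ (x : ℝ) (n : ℕ) : Qn x (n + 1) = Pn x n := by
  unfold Qn Pn
  rw [sum_powerset_range_succ]
  have hfalse : ∀ T : Finset ℕ,
      (((∀ i ∈ insert n T, i + 1 ∉ insert n T) ∧ ∀ i ∈ insert n T, i + 1 ≠ n + 1)) ↔ False := by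
    intro T
    simp only [iff_false]
    rintro ⟨-, h⟩
    exact h n (Finset.mem_insert_self _ _) rfl
  simp only [hfalse, if_false, Finset.sum_const_zero, add_zero]
  refine Finset.sum_congr rfl fun T hT => ?_
  have hsub : T ⊆ Finset.range n := Finset.mem_powerset.1 hT
  have hauto : ∀ i ∈ T, i + 1 ≠ n + 1 := fun i hi he => by
    have := Finset.mem_range.1 (hsub hi); omega
  have hiff : ((∀ i ∈ T, i + 1 ∉ T) ∧ ∀ i ∈ T, i + 1 ≠ n + 1) ↔ (∀ i ∈ T, i + 1 ∉ T) :=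
    ⟨And.left, fun h => ⟨h, hauto⟩⟩
  simp only [hiff]

lemma Rn_succ (x : ℝ) (n : ℕ) (hn : n ≠ 0) : Rn x (n + 1) = Rn x n + x * Sn x n := by
  unfold Rn Sn
  rw [sum_powerset_range_succ, Finset.mul_sum]
  congr 1
  refine Finset.sum_congr rfl fun T hT => ?_
  have hsub : T ⊆ Finset.range n := Finset.mem_powerset.1 hT
  have hTn : n ∉ T := fun h => by have := Finset.mem_range.1 (hsub h); omega
  rw [Finset.card_insert_of_notMem hTn]
  have hz : (0 ∉ insert n T) ↔ (0 ∉ T) := by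
    simp [Finset.mem_insert, Ne.symm hn, hn]
  simp only [insert_indep_iff n T hsub, hz]
  have hiff : (((∀ i ∈ T, i + 1 ∉ T) ∧ ∀ i ∈ T, i + 1 ≠ n) ∧ 0 ∉ T)
      ↔ ((∀ i ∈ T, i + 1 ∉ T) ∧ 0 ∉ T ∧ ∀ i ∈ T, i + 1 ≠ n) := by tauto
  simp only [hiff]
  split_ifs with h
  · ring
  · ring

lemma Sn_succ (x : ℝ) (n : ℕ) : Sn x (n + 1) = Rn x n := by
  unfold Sn Rn
  rw [sum_powerset_range_succ]
  have hfalse : ∀ T : Finset ℕ,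
      (((∀ i ∈ insert n T, i + 1 ∉ insert n T) ∧ 0 ∉ insert n T
          ∧ ∀ i ∈ insert n T, i + 1 ≠ n + 1)) ↔ False := by
    intro T
    simp only [iff_false]
    rintro ⟨-, -, h⟩
    exact h n (Finset.mem_insert_self _ _) rfl
  simp only [hfalse, if_false, Finset.sum_const_zero, add_zero]
  refine Finset.sum_congr rfl fun T hT => ?_
  have hsub : T ⊆ Finset.range n := Finset.mem_powerset.1 hT
  have hauto : ∀ i ∈ T, i + 1 ≠ n + 1 := fun i hi he => by
    have := Finset.mem_range.1 (hsub hi); omega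
  have hiff : ((∀ i ∈ T, i + 1 ∉ T) ∧ 0 ∉ T ∧ ∀ i ∈ T, i + 1 ≠ n + 1)
      ↔ ((∀ i ∈ T, i + 1 ∉ T) ∧ 0 ∉ T) := by tauto
  simp only [hiff]

lemma Rn_one (x : ℝ) : Rn x 1 = 1 := by
  unfold Rn
  rw [show (1 : ℕ) = 0 + 1 from rfl, sum_powerset_range_succ]
  simp

lemma Pn_one (x : ℝ) : Pn x 1 = 1 + x := by
  rw [show (1 : ℕ) = 0 + 1 from rfl, Pn_succ, Pn_zero, Qn_zero, mul_one]

lemma Pn_rec (x : ℝ) (n : ℕ) : Pn x (n + 2) = Pn x (n + 1) + x * Pn x n := by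
  rw [Pn_succ, Qn_succ]

lemma Rn_rec (x : ℝ) (n : ℕ) : Rn x (n + 2) = Rn x (n + 1) + x * Rn x n := by
  rw [Rn_succ x (n + 1) (Nat.succ_ne_zero n), Sn_succ]

lemma linrec_closed (l1 l2 x : ℝ) (h1 : l1 + l2 = 1) (h2 : l1 * l2 = -x)
    (F : ℕ → ℝ) (m : ℕ) (hF0 : (l2 - l1) * F 0 = l2 ^ m - l1 ^ m)
    (hF1 : (l2 - l1) * F 1 = l2 ^ (m + 1) - l1 ^ (m + 1))
    (hrec : ∀ n, F (n + 2) = F (n + 1) + x * F n) :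
    ∀ n, (l2 - l1) * F n = l2 ^ (n + m) - l1 ^ (n + m) := by
  have hsq1 : l1 ^ 2 = l1 + x := by linear_combination l1 * h1 - h2
  have hsq2 : l2 ^ 2 = l2 + x := by linear_combination l2 * h1 - h2
  intro n
  induction n using Nat.twoStepInduction with
  | zero => simpa using hF0
  | one => simpa [add_comm] using hF1
  | more n ih2 ih1 =>
    have e1 : l1 ^ (n + 2 + m) = l1 ^ (n + 1 + m) + x * l1 ^ (n + m) := by
      have h : l1 ^ (n + 2 + m) = l1 ^ (n + m) * l1 ^ 2 := by ring
      rw [h, hsq1]; ring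
    have e2 : l2 ^ (n + 2 + m) = l2 ^ (n + 1 + m) + x * l2 ^ (n + m) := by
      have h : l2 ^ (n + 2 + m) = l2 ^ (n + m) * l2 ^ 2 := by ring
      rw [h, hsq2]; ring
    rw [hrec n, e1, e2]
    have : (l2 - l1) * (F (n + 1) + x * F n)
        = (l2 - l1) * F (n + 1) + x * ((l2 - l1) * F n) := by ring
    rw [this, ih1, ih2]; ring

lemma fin_transfer (k : ℕ) (g : Finset ℕ → ℝ) :
    ∑ T ∈ (Finset.range k).powerset, g T
      = ∑ T : Finset (Fin k), g (T.map Fin.valEmbedding) := by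
  have hmapsub : ∀ T : Finset (Fin k), T.map Fin.valEmbedding ∈ (Finset.range k).powerset := by
    intro T
    rw [Finset.mem_powerset]
    intro m hm
    rw [Finset.mem_map] at hm
    obtain ⟨i, -, rfl⟩ := hm
    exact Finset.mem_range.2 i.isLt
  refine Finset.sum_bij'
    (fun (T : Finset ℕ) (hT : T ∈ (Finset.range k).powerset) =>
      T.attachFin (fun m hm => Finset.mem_range.1 (Finset.mem_powerset.1 hT hm)))
    (fun T _ => T.map Fin.valEmbedding)
    (fun T hT => Finset.mem_univ _)
    (fun T _ => hmapsub T)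
    ?_ ?_ ?_
  · intro T hT
    ext m
    simp [Finset.mem_map, Finset.mem_attachFin]
  · intro T hT
    ext i
    rw [Finset.mem_attachFin, Finset.mem_map]
    constructor
    · rintro ⟨a, ha, h⟩
      rwa [show a = i from Fin.val_injective h] at ha
    · intro hi
      exact ⟨i, hi, rfl⟩
  · intro T hT
    congr 1
    ext m
    rw [Finset.mem_map]
    constructor
    · intro hm
      exact ⟨⟨m, Finset.mem_range.1 (Finset.mem_powerset.1 hT hm)⟩,
        Finset.mem_attachFin _ |>.2 hm, rfl⟩
    · rintro ⟨i, hi, rfl⟩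
      exact (Finset.mem_attachFin _).1 hi


lemma indep_disjSum_iff {V : Type*} (G : SimpleGraph V) (a0 : V) (k : ℕ)
    (S : Finset V) (T : Finset (Fin k)) :
    IndepSet (pathAttach G a0 k) (S.disjSum T) ↔
      (IndepSet G S ∧ (∀ i ∈ T, ∀ j ∈ T, (i : ℕ) + 1 ≠ (j : ℕ))
        ∧ ¬(a0 ∈ S ∧ ∃ i ∈ T, (i : ℕ) = 0)) := by
  constructor
  · intro h
    refine ⟨?_, ?_, ?_⟩
    · intro u hu v hv hadj
      refine h (.inl u) (Finset.inl_mem_disjSum.2 hu) (.inl v) (Finset.inl_mem_disjSum.2 hv) ?_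
      rw [pathAttach, SimpleGraph.fromRel_adj]
      exact ⟨by simpa using hadj.ne, Or.inl (Or.inl ⟨u, v, rfl, rfl, hadj⟩)⟩
    · intro i hi j hj he
      refine h (.inr i) (Finset.inr_mem_disjSum.2 hi) (.inr j) (Finset.inr_mem_disjSum.2 hj) ?_
      rw [pathAttach, SimpleGraph.fromRel_adj]
      refine ⟨?_, Or.inl (Or.inr (Or.inr ⟨i, j, rfl, rfl, he⟩))⟩
      simp only [ne_eq, Sum.inr.injEq]
      rintro rfl; omega
    · rintro ⟨ha0, i, hi, hi0⟩
      refine h (.inl a0) (Finset.inl_mem_disjSum.2 ha0) (.inr i) (Finset.inr_mem_disjSum.2 hi) ?_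
      rw [pathAttach, SimpleGraph.fromRel_adj]
      exact ⟨by simp, Or.inl (Or.inr (Or.inl ⟨i, rfl, rfl, hi0⟩))⟩
  · rintro ⟨hS, hT, hST⟩ p hp q hq hadj
    rw [pathAttach, SimpleGraph.fromRel_adj] at hadj
    obtain ⟨hne, hr | hr⟩ := hadj
    · rcases hr with ⟨u, v, rfl, rfl, huv⟩ | ⟨i, rfl, rfl, h3⟩ | ⟨i, j, rfl, rfl, hij⟩
      · exact hS u (Finset.inl_mem_disjSum.1 hp) v (Finset.inl_mem_disjSum.1 hq) huv
      · exact hST ⟨Finset.inl_mem_disjSum.1 hp, i, Finset.inr_mem_disjSum.1 hq, h3⟩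
      · exact hT i (Finset.inr_mem_disjSum.1 hp) j (Finset.inr_mem_disjSum.1 hq) hij
    · rcases hr with ⟨u, v, rfl, rfl, huv⟩ | ⟨i, rfl, rfl, h3⟩ | ⟨i, j, rfl, rfl, hij⟩
      · exact hS u (Finset.inl_mem_disjSum.1 hq) v (Finset.inl_mem_disjSum.1 hp) huv
      · exact hST ⟨Finset.inl_mem_disjSum.1 hq, i, Finset.inr_mem_disjSum.1 hp, h3⟩
      · exact hT i (Finset.inr_mem_disjSum.1 hq) j (Finset.inr_mem_disjSum.1 hp) hij

lemma indPoly_pathAttach {V : Type*} [Fintype V] [DecidableEq V]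
    (G : SimpleGraph V) (a0 : V) (k : ℕ) (x : ℝ) :
    indPoly (pathAttach G a0 k) (fun _ => x)
      = ∑ S : Finset V,
          (if IndepSet G S then x ^ S.card * (if a0 ∈ S then Rn x k else Pn x k) else 0) := by
  have hPF : (∑ T : Finset (Fin k),
      if (∀ i ∈ T, ∀ j ∈ T, (i : ℕ) + 1 ≠ (j : ℕ)) then x ^ T.card else 0) = Pn x k := by
    rw [Pn, fin_transfer]
    refine Finset.sum_congr rfl fun T _ => ?_
    have hcond : (∀ i ∈ T.map Fin.valEmbedding, i + 1 ∉ T.map Fin.valEmbedding)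
        ↔ (∀ i ∈ T, ∀ j ∈ T, (i : ℕ) + 1 ≠ (j : ℕ)) := by
      constructor
      · intro h i hi j hj he
        refine h (i : ℕ) (Finset.mem_map_of_mem _ hi) ?_
        rw [he]
        exact Finset.mem_map_of_mem _ hj
      · intro h m hm hmem
        rw [Finset.mem_map] at hm hmem
        obtain ⟨i, hi, rfl⟩ := hm
        obtain ⟨j, hj, hj'⟩ := hmem
        exact h i hi j hj hj'.symm
    simp only [hcond, Finset.card_map]
  have hRF : (∑ T : Finset (Fin k),
      if ((∀ i ∈ T, ∀ j ∈ T, (i : ℕ) + 1 ≠ (j : ℕ)) ∧ ∀ i ∈ T, (i : ℕ) ≠ 0)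
        then x ^ T.card else 0) = Rn x k := by
    rw [Rn, fin_transfer]
    refine Finset.sum_congr rfl fun T _ => ?_
    have hcond : ((∀ i ∈ T.map Fin.valEmbedding, i + 1 ∉ T.map Fin.valEmbedding)
          ∧ 0 ∉ T.map Fin.valEmbedding)
        ↔ ((∀ i ∈ T, ∀ j ∈ T, (i : ℕ) + 1 ≠ (j : ℕ)) ∧ ∀ i ∈ T, (i : ℕ) ≠ 0) := by
      constructor
      · rintro ⟨h, hz⟩
        refine ⟨?_, ?_⟩
        · intro i hi j hj he
          refine h (i : ℕ) (Finset.mem_map_of_mem _ hi) ?_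
          rw [he]
          exact Finset.mem_map_of_mem _ hj
        · intro i hi h0
          exact hz (by rw [← h0]; exact Finset.mem_map_of_mem _ hi)
      · rintro ⟨h, hz⟩
        refine ⟨?_, ?_⟩
        · intro m hm hmem
          rw [Finset.mem_map] at hm hmem
          obtain ⟨i, hi, rfl⟩ := hm
          obtain ⟨j, hj, hj'⟩ := hmem
          exact h i hi j hj hj'.symm
        · intro hm
          rw [Finset.mem_map] at hm
          obtain ⟨i, hi, hi'⟩ := hm
          exact hz i hi hi'
    simp only [hcond, Finset.card_map]
  have hbij : Function.Bijective
      (fun p : Finset V × Finset (Fin k) => p.1.disjSum p.2) := by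
    constructor
    · intro p q h
      have h1 := congrArg Finset.toLeft h
      have h2 := congrArg Finset.toRight h
      simp only [Finset.toLeft_disjSum, Finset.toRight_disjSum] at h1 h2
      exact Prod.ext h1 h2
    · intro A
      exact ⟨(A.toLeft, A.toRight), Finset.toLeft_disjSum_toRight⟩
  rw [indPoly]
  refine Eq.trans ((Fintype.sum_bijective
    (fun p : Finset V × Finset (Fin k) => p.1.disjSum p.2) hbij _ _ (fun p => rfl)).symm) ?_
  rw [Fintype.sum_prod_type]
  refine Finset.sum_congr rfl fun S _ => ?_
  have hterm : ∀ T : Finset (Fin k),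
      (if IndepSet (pathAttach G a0 k) (S.disjSum T)
        then ∏ v ∈ S.disjSum T, (fun _ : V ⊕ Fin k => x) v else 0)
      = (if (IndepSet G S ∧ (∀ i ∈ T, ∀ j ∈ T, (i : ℕ) + 1 ≠ (j : ℕ))
            ∧ ¬(a0 ∈ S ∧ ∃ i ∈ T, (i : ℕ) = 0))
          then x ^ S.card * x ^ T.card else 0) := by
    intro T
    by_cases hc : IndepSet (pathAttach G a0 k) (S.disjSum T)
    · rw [if_pos hc, if_pos ((indep_disjSum_iff G a0 k S T).1 hc),
        Finset.prod_disjSum, Finset.prod_const, Finset.prod_const]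
    · rw [if_neg hc, if_neg (fun h => hc ((indep_disjSum_iff G a0 k S T).2 h))]
  refine (Finset.sum_congr rfl fun T _ => hterm T).trans ?_
  by_cases h1 : IndepSet G S
  · by_cases h2 : a0 ∈ S
    · rw [if_pos h1, if_pos h2, ← hRF, Finset.mul_sum]
      refine Finset.sum_congr rfl fun T _ => ?_
      have hiff : (IndepSet G S ∧ (∀ i ∈ T, ∀ j ∈ T, (i : ℕ) + 1 ≠ (j : ℕ))
            ∧ ¬(a0 ∈ S ∧ ∃ i ∈ T, (i : ℕ) = 0))
          ↔ ((∀ i ∈ T, ∀ j ∈ T, (i : ℕ) + 1 ≠ (j : ℕ)) ∧ ∀ i ∈ T, (i : ℕ) ≠ 0) := by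
        constructor
        · rintro ⟨-, hT, hz⟩
          exact ⟨hT, fun i hi h0 => hz ⟨h2, i, hi, h0⟩⟩
        · rintro ⟨hT, hz⟩
          exact ⟨h1, hT, fun ⟨_, i, hi, h0⟩ => hz i hi h0⟩
      by_cases hc : (∀ i ∈ T, ∀ j ∈ T, (i : ℕ) + 1 ≠ (j : ℕ)) ∧ ∀ i ∈ T, (i : ℕ) ≠ 0
      · rw [if_pos (hiff.2 hc), if_pos hc]
      · rw [if_neg (fun h => hc (hiff.1 h)), if_neg hc, mul_zero]
    · rw [if_pos h1, if_neg h2, ← hPF, Finset.mul_sum]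
      refine Finset.sum_congr rfl fun T _ => ?_
      have hiff : (IndepSet G S ∧ (∀ i ∈ T, ∀ j ∈ T, (i : ℕ) + 1 ≠ (j : ℕ))
            ∧ ¬(a0 ∈ S ∧ ∃ i ∈ T, (i : ℕ) = 0))
          ↔ (∀ i ∈ T, ∀ j ∈ T, (i : ℕ) + 1 ≠ (j : ℕ)) := by
        constructor
        · rintro ⟨-, hT, -⟩; exact hT
        · intro hT; exact ⟨h1, hT, fun ha' => h2 ha'.1⟩
      by_cases hc : (∀ i ∈ T, ∀ j ∈ T, (i : ℕ) + 1 ≠ (j : ℕ))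
      · rw [if_pos (hiff.2 hc), if_pos hc]
      · rw [if_neg (fun h => hc (hiff.1 h)), if_neg hc, mul_zero]
  · rw [if_neg h1]
    refine Finset.sum_eq_zero fun T _ => ?_
    rw [if_neg]
    rintro ⟨h, -, -⟩
    exact h1 h

/-- Path reduction: attaching a path of length `k` at `a₀`, with all weights `x`, gives
`I(P_k(G); x) = C_k · I(G; y)` where `y` is `x` except `y_{a₀} = B_k / C_k`. -/
theorem path_reduction {V : Type*} [Fintype V] [DecidableEq V]
    (G : SimpleGraph V) (a0 : V) (k : ℕ) (hk : 1 ≤ k)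
    (x : ℝ) (hx : x > -(1/4)) (hx0 : x ≠ 0)
    (l1 l2 : ℝ)
    (hl1 : l1 = 1/2 + Real.sqrt (1/4 + x)) (hl2 : l2 = 1/2 - Real.sqrt (1/4 + x))
    (hpow : l1 ^ (k + 2) ≠ l2 ^ (k + 2))
    (B C : ℝ)
    (hB : B = x / (l2 - l1) * (-(l1 ^ (k + 1)) + l2 ^ (k + 1)))
    (hC : C = 1 / (l2 - l1) * (-(l1 ^ (k + 2)) + l2 ^ (k + 2))) :
    C ≠ 0 ∧
    indPoly (pathAttach G a0 k) (fun _ => x)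
      = C * indPoly G (Function.update (fun _ : V => x) a0 (B / C)) := by
  have hs : Real.sqrt (1/4 + x) ^ 2 = 1/4 + x := Real.sq_sqrt (by linarith)
  have hspos : 0 < Real.sqrt (1/4 + x) := Real.sqrt_pos.2 (by linarith)
  have h1 : l1 + l2 = 1 := by rw [hl1, hl2]; ring
  have h2 : l1 * l2 = -x := by rw [hl1, hl2]; linear_combination -hs
  have hsq1 : l1 ^ 2 = l1 + x := by linear_combination l1 * h1 - h2
  have hsq2 : l2 ^ 2 = l2 + x := by linear_combination l2 * h1 - h2
  have hd : l2 - l1 ≠ 0 := by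
    have he : l2 - l1 = -(2 * Real.sqrt (1/4 + x)) := by rw [hl1, hl2]; ring
    rw [he]
    intro h
    nlinarith [hspos]
  have hnum : -(l1 ^ (k + 2)) + l2 ^ (k + 2) ≠ 0 := fun h => hpow (by linarith)
  have hCne : C ≠ 0 := by
    rw [hC]
    exact mul_ne_zero (one_div_ne_zero hd) hnum
  refine ⟨hCne, ?_⟩
  have hP0 : (l2 - l1) * Pn x 0 = l2 ^ 2 - l1 ^ 2 := by
    rw [Pn_zero]; linear_combination (l1 - l2) * h1
  have hP1 : (l2 - l1) * Pn x 1 = l2 ^ (2 + 1) - l1 ^ (2 + 1) := by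
    rw [Pn_one]; linear_combination (l1 + 1) * hsq1 - (l2 + 1) * hsq2
  have hR0 : (l2 - l1) * Rn x 0 = l2 ^ 1 - l1 ^ 1 := by rw [Rn_zero]; ring
  have hR1 : (l2 - l1) * Rn x 1 = l2 ^ (1 + 1) - l1 ^ (1 + 1) := by
    rw [Rn_one]; linear_combination (l1 - l2) * h1
  have hkeyP := linrec_closed l1 l2 x h1 h2 (Pn x) 2 hP0 hP1 (Pn_rec x) k
  have hkeyR := linrec_closed l1 l2 x h1 h2 (Rn x) 1 hR0 hR1 (Rn_rec x) k
  have hPk : Pn x k = C := by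
    rw [hC]
    field_simp
    linear_combination hkeyP
  have hBk : x * Rn x k = B := by
    rw [hB]
    field_simp
    linear_combination hkeyR
  rw [indPoly_pathAttach G a0 k x, indPoly, Finset.mul_sum]
  refine Finset.sum_congr rfl fun S _ => ?_
  by_cases h1S : IndepSet G S
  · rw [if_pos h1S, if_pos h1S]
    by_cases h2S : a0 ∈ S
    · rw [if_pos h2S]
      have hprod : ∏ v ∈ S, Function.update (fun _ : V => x) a0 (B / C) v
          = (B / C) * ∏ v ∈ S.erase a0, x := by
        rw [← Finset.mul_prod_erase S _ h2S, Function.update_self]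
        congr 1
        refine Finset.prod_congr rfl fun v hv => ?_
        exact Function.update_of_ne (Finset.ne_of_mem_erase hv) _ _
      rw [hprod, Finset.prod_const, ← hBk]
      have hcard : (S.erase a0).card + 1 = S.card := by
        rw [Finset.card_erase_of_mem h2S]
        have : 0 < S.card := Finset.card_pos.2 ⟨a0, h2S⟩
        omega
      have hcc : C * (x * Rn x k / C * x ^ (S.erase a0).card)
          = x * Rn x k * x ^ (S.erase a0).card := by field_simp
      rw [hcc, ← hcard, pow_succ]
      ring
    · rw [if_neg h2S]
      have hprod : ∏ v ∈ S, Function.update (fun _ : V => x) a0 (B / C) v = x ^ S.card := by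
        rw [show ∏ v ∈ S, Function.update (fun _ : V => x) a0 (B / C) v = ∏ v ∈ S, x from
          Finset.prod_congr rfl fun v hv =>
            Function.update_of_ne (fun h => h2S (by rwa [h] at hv)) _ _, Finset.prod_const]
      rw [hprod, ← hPk]
      ring
  · rw [if_neg h1S, if_neg h1S, mul_zero]
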